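/- Let (s, Δ) be a solution of the plane Hamilton system on [0, ξ̄], let n_u ≥ 0 satisfy ñ₀(z) ≤ n_u for all z ∈ ℝ, and suppose that s(η) ≥ 1 and 0 ≤ Δ(η) ≤ Δ₀(η) for all η ∈ [0, ξ̄]. Then for every ξ ∈ [0, ξ̄]: ∫₀^ξ v(η) s'(η)/(2 s(η)²) dη ≤ (K n_u / 2) · Δ₀(ξ)². -/

import Mathlib

open MeasureTheory intervalIntegral Real Set

/-- Lemma 1 of the paper: bound on the work integral
`ν(ξ) = ∫₀^ξ v s'/(2s²) ≤ (K n_u/2) Δ₀(ξ)²` with `Δ₀(ξ) = (1/2)∫₀^ξ v`. -/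
theorem work_integral_upper_bound
    (K Z ξbar : ℝ) (hK : 0 < K) (hZ : 0 ≤ Z) (hξbar : 0 ≤ ξbar)
    (v n0 : ℝ → ℝ) (hv_cont : Continuous v) (hv_nonneg : ∀ x, 0 ≤ v x)
    (hn0_cont : Continuous n0) (hn0_nonneg : ∀ x, 0 ≤ n0 x)
    (s Δ : ℝ → ℝ)
    (hs_pos : ∀ η ∈ Set.Icc (0:ℝ) ξbar, 0 < s η)
    (hΔ' : ∀ η ∈ Set.Icc (0:ℝ) ξbar,
      HasDerivAt Δ ((1 + v η) / (2 * (s η)^2) - 1/2) η)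
    (hs' : ∀ η ∈ Set.Icc (0:ℝ) ξbar,
      HasDerivAt s (K * ((∫ ζ in (0:ℝ)..(Z + Δ η), n0 ζ) - ∫ ζ in (0:ℝ)..Z, n0 ζ)) η)
    (hΔ0 : Δ 0 = 0) (hs0 : s 0 = 1)
    (nu : ℝ) (hnu : 0 ≤ nu) (hn0_le : ∀ z : ℝ, n0 z ≤ nu)
    (hs_ge : ∀ η ∈ Set.Icc (0:ℝ) ξbar, 1 ≤ s η)
    (hΔ_nonneg : ∀ η ∈ Set.Icc (0:ℝ) ξbar, 0 ≤ Δ η)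
    (hΔ_le : ∀ η ∈ Set.Icc (0:ℝ) ξbar, Δ η ≤ (1/2) * ∫ ζ in (0:ℝ)..η, v ζ)
    (ξ : ℝ) (hξ : ξ ∈ Set.Icc (0:ℝ) ξbar) :
    (∫ η in (0:ℝ)..ξ, v η * deriv s η / (2 * (s η)^2))
      ≤ (K * nu / 2) * ((1/2) * ∫ ζ in (0:ℝ)..ξ, v ζ)^2 := by
  obtain ⟨hξ0, hξb⟩ := hξ
  have hsub : Set.Icc (0:ℝ) ξ ⊆ Set.Icc (0:ℝ) ξbar :=
    Set.Icc_subset_Icc le_rfl hξb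
  set F : ℝ → ℝ := fun x => (1/2) * ∫ ζ in (0:ℝ)..x, v ζ with hF
  have hFderiv : ∀ x : ℝ, HasDerivAt F ((1/2) * v x) x := fun x =>
    ((hv_cont.integral_hasStrictDerivAt 0 x).hasDerivAt).const_mul (1/2)
  have hF_nonneg : ∀ x, 0 ≤ x → 0 ≤ F x := by
    intro x hx
    have : 0 ≤ ∫ ζ in (0:ℝ)..x, v ζ :=
      intervalIntegral.integral_nonneg hx fun u _ => hv_nonneg u
    positivity
  set N : ℝ → ℝ := fun z => ∫ ζ in (0:ℝ)..z, n0 ζ with hN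
  have hN_cont : Continuous N := by
    rw [continuous_iff_continuousAt]
    intro z
    exact ((hn0_cont.integral_hasStrictDerivAt 0 z).hasDerivAt).continuousAt
  -- bound on N increments
  have hadj : ∀ d : ℝ, N (Z + d) - N Z = ∫ ζ in Z..(Z + d), n0 ζ := by
    intro d
    have h := intervalIntegral.integral_add_adjacent_intervals (μ := MeasureTheory.volume)
      (hn0_cont.intervalIntegrable 0 Z) (hn0_cont.intervalIntegrable Z (Z + d))
    simp only [hN]
    linarith
  have hN_bound : ∀ d : ℝ, 0 ≤ d → N (Z + d) - N Z ≤ nu * d := by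
    intro d hd
    rw [hadj d]
    calc ∫ ζ in Z..(Z + d), n0 ζ ≤ ∫ ζ in Z..(Z + d), nu := by
          apply intervalIntegral.integral_mono_on (by linarith)
            (hn0_cont.intervalIntegrable _ _) (intervalIntegrable_const)
          intro x _; exact hn0_le x
      _ = nu * d := by simp [mul_comm]
  have hN_mono : ∀ d : ℝ, 0 ≤ d → N Z ≤ N (Z + d) := by
    intro d hd
    have h1 := hadj d
    have h2 : 0 ≤ ∫ ζ in Z..(Z + d), n0 ζ :=
      intervalIntegral.integral_nonneg (by linarith) fun u _ => hn0_nonneg u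
    linarith
  -- continuity of Δ and s on Icc 0 ξbar
  have hΔ_cont : ContinuousOn Δ (Set.Icc (0:ℝ) ξbar) := fun η hη =>
    ((hΔ' η hη).continuousAt).continuousWithinAt
  have hs_cont : ContinuousOn s (Set.Icc (0:ℝ) ξbar) := fun η hη =>
    ((hs' η hη).continuousAt).continuousWithinAt
  -- deriv s equals the formula on Icc
  have hderiv_eq : ∀ η ∈ Set.Icc (0:ℝ) ξbar,
      deriv s η = K * (N (Z + Δ η) - N Z) := fun η hη => (hs' η hη).deriv
  -- pointwise bound
  have hpt : ∀ η ∈ Set.Icc (0:ℝ) ξ,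
      v η * deriv s η / (2 * (s η)^2) ≤ K * nu * F η * ((1/2) * v η) := by
    intro η hη
    have hη' := hsub hη
    have hΔη := hΔ_nonneg η hη'
    have hsη := hs_ge η hη'
    rw [hderiv_eq η hη']
    have hds_nonneg : 0 ≤ K * (N (Z + Δ η) - N Z) := by
      have := hN_mono (Δ η) hΔη
      nlinarith
    have hds_le : K * (N (Z + Δ η) - N Z) ≤ K * nu * F η := by
      have h1 := hN_bound (Δ η) hΔη
      have h2 : Δ η ≤ F η := hΔ_le η hη'
      have h3 := mul_le_mul_of_nonneg_left h1 hK.le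
      have h4 := mul_le_mul_of_nonneg_left (mul_le_mul_of_nonneg_left h2 hnu) hK.le
      nlinarith
    have hs2 : 1 ≤ (s η)^2 := by nlinarith
    have hvη := hv_nonneg η
    calc v η * (K * (N (Z + Δ η) - N Z)) / (2 * (s η)^2)
        ≤ v η * (K * (N (Z + Δ η) - N Z)) / 2 := by
          apply div_le_div_of_nonneg_left (by positivity) (by norm_num) (by nlinarith)
      _ ≤ v η * (K * nu * F η) / 2 := by
          apply div_le_div_of_nonneg_right _ (by norm_num)
          nlinarith
      _ = K * nu * F η * ((1/2) * v η) := by ring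
  -- integrability of LHS
  have huIcc : Set.uIcc (0:ℝ) ξ = Set.Icc 0 ξ := Set.uIcc_of_le hξ0
  have hint_lhs : IntervalIntegrable (fun η => v η * deriv s η / (2 * (s η)^2))
      MeasureTheory.volume 0 ξ := by
    apply ContinuousOn.intervalIntegrable
    rw [huIcc]
    have hcont : ContinuousOn (fun η => v η * (K * (N (Z + Δ η) - N Z)) / (2 * (s η)^2))
        (Set.Icc (0:ℝ) ξ) := by
      apply ContinuousOn.div
      · exact (hv_cont.continuousOn).mul
          (continuousOn_const.mul (((hN_cont.comp_continuousOn
            (continuousOn_const.add (hΔ_cont.mono hsub)))).sub continuousOn_const))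
      · exact continuousOn_const.mul (((hs_cont.mono hsub).pow 2))
      · intro x hx
        have := hs_pos x (hsub hx)
        positivity
    apply hcont.congr
    intro x hx
    simp only [hderiv_eq x (hsub hx)]
  have hint_rhs : IntervalIntegrable (fun η => K * nu * F η * ((1/2) * v η))
      MeasureTheory.volume 0 ξ := by
    apply ContinuousOn.intervalIntegrable
    have hFc : Continuous F := by
      rw [continuous_iff_continuousAt]
      exact fun x => (hFderiv x).continuousAt
    exact ((continuous_const.mul hFc).mul (continuous_const.mul hv_cont)).continuousOn
  have hmono := intervalIntegral.integral_mono_on hξ0 hint_lhs hint_rhs hpt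
  -- compute RHS integral via FTC
  set G : ℝ → ℝ := fun x => (K * nu / 2) * (F x)^2 with hG
  have hGderiv : ∀ x ∈ Set.uIcc (0:ℝ) ξ, HasDerivAt G (K * nu * F x * ((1/2) * v x)) x := by
    intro x _
    have h : HasDerivAt (fun y => K * nu / 2 * F y ^ 2)
        (K * nu / 2 * (((2:ℕ):ℝ) * F x ^ (2 - 1) * ((1/2) * v x))) x :=
      (((hFderiv x).pow 2).const_mul (K * nu / 2))
    convert h using 1
    simp
    ring
  have hFTC := intervalIntegral.integral_eq_sub_of_hasDerivAt hGderiv hint_rhs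
  have hF0 : F 0 = 0 := by simp [hF]
  have hG0 : G 0 = 0 := by simp [hG, hF0]
  rw [hFTC, hG0, sub_zero] at hmono
  exact hmono
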